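/- (Escape inequality, used in the proof of Theorem 2.) Let 0 < γ ≤ 1/2, C > 0, let m ≥ 1 be an integer, and let v_1 ≤ v_2 ≤ ⋯ ≤ v_{m+1} be reals such that v_{p+1} − v_p ≤ C/γ^p for every 1 ≤ p ≤ m−1 and v_{m+1} − v_m > C/γ^m. Then (1−γ)·v_1 + γ·v_{m+1} > v_m + C. -/

import Mathlib

/-- Escape inequality used in the proof of Theorem 2: let `0 < γ ≤ 1/2`, `C > 0`,
`m ≥ 1`, and let `v 1 ≤ v 2 ≤ ⋯ ≤ v (m+1)` be reals such that
`v (p+1) - v p ≤ C/γ^p` for every `1 ≤ p ≤ m-1` and `v (m+1) - v m > C/γ^m`.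
Then `(1-γ)·v 1 + γ·v (m+1) > v m + C`. -/
theorem escape_inequality {γ C : ℝ} {m : ℕ}
    (hγ0 : 0 < γ) (hγ : γ ≤ 1 / 2) (hC : 0 < C) (hm : 1 ≤ m)
    (v : ℕ → ℝ)
    (hmono : ∀ p : ℕ, 1 ≤ p → p ≤ m → v p ≤ v (p + 1))
    (hgap : ∀ p : ℕ, 1 ≤ p → p ≤ m - 1 → v (p + 1) - v p ≤ C / γ ^ p)
    (hbig : C / γ ^ m < v (m + 1) - v m) :
    v m + C < (1 - γ) * v 1 + γ * v (m + 1) := by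
  have hγne : γ ≠ 0 := ne_of_gt hγ0
  have key : ∀ n : ℕ, 1 ≤ n → n ≤ m → (1 - γ) * (v n - v 1) ≤ C / γ ^ (n - 1) - C := by
    intro n h1 hnm
    induction n with
    | zero => omega
    | succ k ih =>
      rcases Nat.eq_or_lt_of_le h1 with h | h
      · simp [← h]
      · have hk1 : 1 ≤ k := by omega
        have hkm : k ≤ m := by omega
        have ihk := ih hk1 hkm
        have hg := hgap k hk1 (by omega)
        have hpow : γ ^ k = γ ^ (k - 1) * γ := by
          rw [← pow_succ]; congr 1; omega
        have hpos : (0:ℝ) < γ ^ (k - 1) := pow_pos hγ0 _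
        have heq : C / γ ^ k = C / γ ^ (k-1) + (1 - γ) * (C / γ ^ k) := by
          rw [hpow]; field_simp; ring
        have hγge : γ * (C / γ ^ k) ≥ γ * C := by
          apply mul_le_mul_of_nonneg_left _ (le_of_lt hγ0)
          have : γ ^ k ≤ 1 := pow_le_one₀ (le_of_lt hγ0) (by linarith)
          calc C = C / 1 := by ring
          _ ≤ C / γ ^ k := by
            apply div_le_div_of_nonneg_left (le_of_lt hC) (pow_pos hγ0 _) this
        have hsimp : (Nat.succ k) - 1 = k := by omega
        rw [hsimp]
        have hγle1 : (1:ℝ) - γ ≥ 0 := by linarith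
        linarith [mul_le_mul_of_nonneg_left hg hγle1]
  have h1 := key m hm le_rfl
  have hpow : γ ^ m = γ ^ (m - 1) * γ := by
    rw [← pow_succ]; congr 1; omega
  have hpos : (0:ℝ) < γ ^ (m - 1) := pow_pos hγ0 _
  have h3 : γ * (C / γ ^ m) = C / γ ^ (m - 1) := by
    rw [hpow]; field_simp
  have h2 : γ * (C / γ ^ m) < γ * (v (m+1) - v m) := by
    exact mul_lt_mul_of_pos_left hbig hγ0
  nlinarith
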